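/- For h, k coprime with k even and hh' ≡ −1 (mod 16k), the root-of-unity identity ω_{h,k/2}² / ω_{h,k}⁴ = (−1)^{k/2} · e^{(πi h'/2)(1 − 3k/2)} holds when gcd(4,k) = 2. -/
import Mathlib


/-- The eta multiplier `ω_{h,k}` for `k` odd:
`ω_{h,k} = (−h/k) e^{−πi((k−1)/4 + (1/12)(k − 1/k)(2h − h' + h²h'))}`. -/
noncomputable def omegaKodd (h k h' : ℤ) : ℂ :=
  (jacobiSym (-h) k.toNat : ℂ) *
    Complex.exp (-(Real.pi : ℂ) * Complex.I *
      (((k : ℂ) - 1) / 4 +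
        1 / 12 * ((k : ℂ) - 1 / (k : ℂ)) * (2 * (h : ℂ) - (h' : ℂ) + (h : ℂ) ^ 2 * (h' : ℂ))))

/-- The eta multiplier `ω_{h,k}` for `h` odd:
`ω_{h,k} = (−k/h) e^{−πi((2−hk−h)/4 + (1/12)(k − 1/k)(2h − h' + h²h'))}`. -/
noncomputable def omegaHodd (h k h' : ℤ) : ℂ :=
  (jacobiSym (-k) h.toNat : ℂ) *
    Complex.exp (-(Real.pi : ℂ) * Complex.I *
      (((2 : ℂ) - (h : ℂ) * (k : ℂ) - (h : ℂ)) / 4 +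
        1 / 12 * ((k : ℂ) - 1 / (k : ℂ)) * (2 * (h : ℂ) - (h' : ℂ) + (h : ℂ) ^ 2 * (h' : ℂ))))

/-- The eta multiplier `ω_{h,k}` (using the `k` odd branch when `k` is odd, and the
`h` odd branch otherwise; here `h'` satisfies `hh' ≡ −1` modulo a suitable multiple of `k`). -/
noncomputable def omegaEta (h k h' : ℤ) : ℂ :=
  if k % 2 = 1 then omegaKodd h k h' else omegaHodd h k h'

/-- For `gcd(h,k)=1`, `k ≡ 2 (mod 4)` and `hh' ≡ −1 (mod 16k)`, the root-of-unity identity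
`ω_{h,k/2}²/ω_{h,k}⁴ = (−1)^{k/2} e^{(πi h'/2)(1 − 3k/2)}`. -/
theorem omega_ratio_identity (h k h' : ℤ) (hh0 : 0 ≤ h) (hhk : h < k)
    (hcop : IsCoprime h k) (hk4 : k % 4 = 2) (hcong : h * h' ≡ -1 [ZMOD 16 * k]) :
    (omegaEta h (k / 2) h') ^ 2 / (omegaEta h k h') ^ 4
      = (-1 : ℂ) ^ (k / 2) * Complex.exp ((Real.pi : ℂ) * Complex.I * (h' : ℂ) / 2
          * (1 - 3 * (k : ℂ) / 2)) := by
  obtain ⟨m, hm⟩ : ∃ m, k = 2 * m := ⟨k / 2, by omega⟩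
  subst hm
  have hk2 : (2 * m) / 2 = m := by omega
  have hmodd : m % 2 = 1 := by omega
  have hmpos : 0 < m := by omega
  have hhodd : h % 2 = 1 := by
    rcases Int.even_or_odd h with he | ho
    · exfalso
      have : IsUnit (2 : ℤ) := hcop.isUnit_of_dvd' he.two_dvd ⟨m, rfl⟩
      rw [Int.isUnit_iff] at this; omega
    · exact Int.odd_iff.mp ho
  -- coprimality facts for Jacobi symbols
  have hcopm : IsCoprime h m := hcop.of_isCoprime_of_dvd_right ⟨2, by ring⟩
  have g1 : Int.gcd (-h) ((m.toNat : ℤ)) = 1 := by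
    rw [Int.toNat_of_nonneg hmpos.le, Int.neg_gcd]
    exact Int.isCoprime_iff_gcd_eq_one.mp hcopm
  have g2 : Int.gcd (-(2 * m)) ((h.toNat : ℤ)) = 1 := by
    rw [Int.toNat_of_nonneg hh0, Int.neg_gcd, Int.gcd_comm]
    exact Int.isCoprime_iff_gcd_eq_one.mp hcop
  have J1 : ((jacobiSym (-h) m.toNat : ℤ) : ℂ) ^ 2 = 1 := by
    rw [← Int.cast_pow, jacobiSym.sq_one g1, Int.cast_one]
  have J2 : ((jacobiSym (-(2 * m)) h.toNat : ℤ) : ℂ) ^ 4 = 1 := by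
    rw [← Int.cast_pow, show (4:ℕ) = 2*2 by rfl, pow_mul, jacobiSym.sq_one g2, one_pow,
      Int.cast_one]
  -- integer witness
  obtain ⟨c, hc⟩ : ∃ c, h * h' = 4 * c - 1 := by
    have h16 : (16 * (2 * m) : ℤ) ∣ -1 - h * h' := hcong.dvd
    obtain ⟨d, hd⟩ := h16
    exact ⟨-(8 * m * d), by linarith⟩
  obtain ⟨a, ha⟩ : ∃ a, h = 2 * a + 1 := ⟨(h - 1) / 2, by omega⟩
  obtain ⟨b, hb⟩ : ∃ b, m = 2 * b + 1 := ⟨(m - 1) / 2, by omega⟩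
  have e1 : h' * h ^ 2 = h * (4 * c - 1) := by rw [← hc]; ring
  obtain ⟨n, hn⟩ : ∃ n : ℤ,
      h ^ 2 * h' * m + 2 * h' * m - h' - m + 3 - 2 * h * m - 2 * h = 4 * n := by
    refine ⟨c * h * (3 * m - 1) - (a ^ 2 + a) * (2 * m - 1) * h' - 5 * a * b - 3 * a - 3 * b - 1,
      ?_⟩
    subst ha hb
    linear_combination (3 * (2 * b + 1) - 1) * e1
  have hnC : ((h : ℂ) ^ 2 * h' * m + 2 * h' * m - h' - m + 3 - 2 * h * m - 2 * h)
      = 4 * (n : ℂ) := by exact_mod_cast congrArg (fun z : ℤ => (z : ℂ)) hn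
  -- unfold
  rw [hk2, omegaEta, omegaEta, if_pos hmodd, if_neg (by omega : ¬ (2 * m) % 2 = 1),
    omegaKodd, omegaHodd, mul_pow, mul_pow, J1, J2, one_mul, one_mul,
    ← Complex.exp_nat_mul, ← Complex.exp_nat_mul, ← Complex.exp_sub]
  have hneg : (-1 : ℂ) ^ m = -1 := Odd.neg_one_zpow (Int.odd_iff.mpr hmodd)
  rw [hneg, neg_one_mul,
    show -Complex.exp ((Real.pi : ℂ) * Complex.I * (h' : ℂ) / 2
        * (1 - 3 * ((2 * m : ℤ) : ℂ) / 2))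
      = Complex.exp ((Real.pi : ℂ) * Complex.I + (Real.pi : ℂ) * Complex.I * (h' : ℂ) / 2
        * (1 - 3 * ((2 * m : ℤ) : ℂ) / 2)) from by
      rw [Complex.exp_add, Complex.exp_pi_mul_I, neg_one_mul],
    Complex.exp_eq_exp_iff_exists_int]
  refine ⟨n, ?_⟩
  have hm0 : (m : ℂ) ≠ 0 := by exact_mod_cast hmpos.ne'
  push_cast
  linear_combination (Real.pi * Complex.I / 2) * hnC
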